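/- Let A = 𝔽_p[x,y,z,u,v]/(x^5+y^5+z^5+u^5+v^5) with p ≠ 5. Then x^4 lies in the tight closure of the ideal I = (y,z,u,v): there exists a nonzero c ∈ A with c·(x^4)^{p^e} ∈ I^{[p^e]} for all e ≥ 0. -/

import Mathlib

lemma four_sum_pow_mem {R : Type*} [CommRing R] (J : Ideal R) {a b c d : R} {n m : ℕ}
    (ha : a ^ n ∈ J) (hb : b ^ n ∈ J) (hc : c ^ n ∈ J) (hd : d ^ n ∈ J)
    (hm : 4 * n ≤ m + 3) : (a + b + c + d) ^ m ∈ J := by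
  have h1 : (a + b) ^ (m + 2 - 2 * n) ∈ J :=
    J.add_pow_mem_of_pow_mem_of_le ha hb (by omega)
  have h2 : (a + b + c) ^ (m + 1 - n) ∈ J :=
    J.add_pow_mem_of_pow_mem_of_le h1 hc (by omega)
  exact J.add_pow_mem_of_pow_mem_of_le h2 hd (by omega)

open MvPolynomial in
/-- In `A = 𝔽_p[x,y,z,u,v]/(x^5+y^5+z^5+u^5+v^5)` with `p ≠ 5`, the element `x^4`
lies in the tight closure of `I = (y,z,u,v)`: there is a nonzero `c` with
`c·(x^4)^{p^e} ∈ I^{[p^e]} = (y^{p^e}, z^{p^e}, u^{p^e}, v^{p^e})` for all `e`. -/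
theorem x4_mem_tightClosure (p : ℕ) [Fact p.Prime] (hp5 : p ≠ 5) :
    ∃ c : MvPolynomial (Fin 5) (ZMod p) ⧸
        (Ideal.span {∑ i : Fin 5, X i ^ 5} : Ideal (MvPolynomial (Fin 5) (ZMod p))),
      c ≠ 0 ∧ ∀ e : ℕ,
        c * (Ideal.Quotient.mk _ (X 0) ^ 4) ^ p ^ e ∈
          Ideal.span {Ideal.Quotient.mk _ (X 1) ^ p ^ e,
            Ideal.Quotient.mk _ (X 2) ^ p ^ e,
            Ideal.Quotient.mk _ (X 3) ^ p ^ e,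
            Ideal.Quotient.mk _ (X 4) ^ p ^ e} := by
  set mk := Ideal.Quotient.mk
    (Ideal.span {∑ i : Fin 5, X i ^ 5} : Ideal (MvPolynomial (Fin 5) (ZMod p))) with hmk
  refine ⟨mk (X 0), ?_, ?_⟩
  · -- nonzeroness of x
    intro h
    rw [hmk, Ideal.Quotient.eq_zero_iff_mem, Ideal.mem_span_singleton] at h
    obtain ⟨g, hg⟩ := h
    have := congrArg (eval (![1, 0, 0, 0, -1] : Fin 5 → ZMod p)) hg
    simp only [map_mul, map_sum, map_pow, eval_X, Fin.sum_univ_five] at this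
    norm_num [Matrix.cons_val_two, Matrix.cons_val_three, Matrix.cons_val_four] at this
  · intro e
    set q := p ^ e with hq
    -- q is not divisible by 5
    have hq5 : ¬ (5 ∣ q) := by
      intro h
      have h5 : (5 : ℕ).Prime := by norm_num
      have := (Nat.Prime.dvd_of_dvd_pow h5 h)
      have := ((Nat.prime_dvd_prime_iff_eq h5 (Fact.out : p.Prime)).mp this)
      exact hp5 this.symm
    have hq1 : 1 ≤ q := Nat.one_le_pow _ _ (Fact.out : p.Prime).pos
    set k := q / 5 with hk
    have hks : 5 * k + 1 ≤ q ∧ q ≤ 5 * k + 4 := by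
      have h1 := Nat.div_add_mod q 5
      have h2 : q % 5 ≠ 0 := fun h => hq5 (Nat.dvd_of_mod_eq_zero h)
      have h3 : q % 5 < 5 := Nat.mod_lt _ (by norm_num)
      omega
    set m := (4 * q + 1) / 5 with hm
    set r := (4 * q + 1) % 5 with hr
    have hmr : 5 * m + r = 4 * q + 1 := Nat.div_add_mod _ _
    have hmk4 : 4 * k + 1 ≤ m := by
      rw [hm, Nat.le_div_iff_mul_le (by norm_num)]
      omega
    -- the relation x^5 = -(y^5+z^5+u^5+v^5)
    have h0 : mk (∑ i : Fin 5, X i ^ 5) = 0 := Ideal.Quotient.eq_zero_iff_mem.mpr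
      (Ideal.subset_span (Set.mem_singleton _))
    rw [map_sum] at h0
    simp only [Fin.sum_univ_five, map_pow] at h0
    have hrel : mk (X 0) ^ 5 =
        -(mk (X 1) ^ 5 + mk (X 2) ^ 5 + mk (X 3) ^ 5 + mk (X 4) ^ 5) := by
      linear_combination h0
    set J : Ideal _ := Ideal.span {mk (X 1) ^ q, mk (X 2) ^ q, mk (X 3) ^ q, mk (X 4) ^ q}
      with hJ
    have hymem : ∀ w : MvPolynomial (Fin 5) (ZMod p), mk w ^ q ∈ J →
        (mk w ^ 5) ^ (k + 1) ∈ J := by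
      intro w hw
      have : (mk w ^ 5) ^ (k + 1) = mk w ^ q * mk w ^ (5 * (k + 1) - q) := by
        rw [← pow_mul, ← pow_add]
        congr 1
        omega
      rw [this]
      exact J.mul_mem_right _ hw
    have h1 : mk (X 1) ^ q ∈ J := Ideal.subset_span (Set.mem_insert _ _)
    have h2 : mk (X 2) ^ q ∈ J :=
      Ideal.subset_span (Set.mem_insert_of_mem _ (Set.mem_insert _ _))
    have h3 : mk (X 3) ^ q ∈ J :=
      Ideal.subset_span (Set.mem_insert_of_mem _ (Set.mem_insert_of_mem _ (Set.mem_insert _ _)))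
    have h4 : mk (X 4) ^ q ∈ J :=
      Ideal.subset_span (Set.mem_insert_of_mem _ (Set.mem_insert_of_mem _
        (Set.mem_insert_of_mem _ rfl)))
    have hS : (mk (X 1) ^ 5 + mk (X 2) ^ 5 + mk (X 3) ^ 5 + mk (X 4) ^ 5) ^ m ∈ J :=
      four_sum_pow_mem J (hymem _ h1) (hymem _ h2) (hymem _ h3) (hymem _ h4) (by omega)
    have hcalc : mk (X 0) * (mk (X 0) ^ 4) ^ q =
        (-1) ^ m * (mk (X 1) ^ 5 + mk (X 2) ^ 5 + mk (X 3) ^ 5 + mk (X 4) ^ 5) ^ m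
          * mk (X 0) ^ r := by
      have e1 : mk (X 0) * (mk (X 0) ^ 4) ^ q = mk (X 0) ^ (5 * m + r) := by
        rw [← pow_mul, ← pow_succ']
        congr 1
        omega
      rw [e1, pow_add, pow_mul, hrel, neg_eq_neg_one_mul
        (mk (X 1) ^ 5 + mk (X 2) ^ 5 + mk (X 3) ^ 5 + mk (X 4) ^ 5), mul_pow]
    rw [hcalc]
    exact J.mul_mem_right _ (J.mul_mem_left _ hS)
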